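/- If at some iteration k ≥ 1 the PMM stopping criterion holds, i.e. ‖Mu_k+Cv_k−d‖+‖Mu_k−w_{k-1}‖ = 0, then (u_k, v_k, x_k) is a saddle point of the Lagrangian L, where x_k = z_{k-1}+λw_{k-1}+λ(Cv_k−d). -/

import Mathlib

open scoped RealInnerProductSpace

noncomputable section

/-- `w` is a subgradient of the extended-real-valued function `φ` at `x`. -/
def HasSubgrad {E : Type*} [NormedAddCommGroup E] [InnerProductSpace ℝ E]
    (φ : E → EReal) (w x : E) : Prop :=
  ∀ x' : E, φ x + ((⟪w, x' - x⟫ : ℝ) : EReal) ≤ φ x'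

/-- `w` is an `ε`-subgradient of `φ` at `x`. -/
def HasESubgrad {E : Type*} [NormedAddCommGroup E] [InnerProductSpace ℝ E]
    (φ : E → EReal) (ε : ℝ) (w x : E) : Prop :=
  ∀ x' : E, φ x + ((⟪w, x' - x⟫ : ℝ) : EReal) - (ε : EReal) ≤ φ x'

/-- Convexity for an extended-real-valued function. -/
def ConvexE {E : Type*} [NormedAddCommGroup E] [InnerProductSpace ℝ E]
    (φ : E → EReal) : Prop :=
  ∀ x y : E, ∀ a b : ℝ, 0 ≤ a → 0 ≤ b → a + b = 1 →
    φ (a • x + b • y) ≤ (a : EReal) * φ x + (b : EReal) * φ y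

/-- Proper closed convex function with values in `(-∞, ∞]`. -/
def IsPCC {E : Type*} [NormedAddCommGroup E] [InnerProductSpace ℝ E]
    (φ : E → EReal) : Prop :=
  (∀ x, φ x ≠ ⊥) ∧ (∃ x, φ x ≠ ⊤) ∧ LowerSemicontinuous φ ∧ ConvexE φ

/-- Fenchel conjugate. -/
def fconj {E : Type*} [NormedAddCommGroup E] [InnerProductSpace ℝ E]
    (φ : E → EReal) (w : E) : EReal :=
  ⨆ x : E, ((⟪w, x⟫ : ℝ) : EReal) - φ x

/-- Lagrangian of `min { f u + g v : M u + C v = d }`. -/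
def Lag {E₁ E₂ F : Type*} [NormedAddCommGroup E₁] [InnerProductSpace ℝ E₁]
    [NormedAddCommGroup E₂] [InnerProductSpace ℝ E₂]
    [NormedAddCommGroup F] [InnerProductSpace ℝ F]
    (f : E₁ → EReal) (g : E₂ → EReal) (M : E₁ →ₗ[ℝ] F) (C : E₂ →ₗ[ℝ] F) (d : F)
    (u : E₁) (v : E₂) (z : F) : EReal :=
  f u + g v + ((⟪M u + C v - d, z⟫ : ℝ) : EReal)

/-- Saddle point of the Lagrangian. -/
def IsSaddle {E₁ E₂ F : Type*} [NormedAddCommGroup E₁] [InnerProductSpace ℝ E₁]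
    [NormedAddCommGroup E₂] [InnerProductSpace ℝ E₂]
    [NormedAddCommGroup F] [InnerProductSpace ℝ F]
    (f : E₁ → EReal) (g : E₂ → EReal) (M : E₁ →ₗ[ℝ] F) (C : E₂ →ₗ[ℝ] F) (d : F)
    (us : E₁) (vs : E₂) (zs : F) : Prop :=
  Lag f g M C d us vs zs ≠ ⊤ ∧ Lag f g M C d us vs zs ≠ ⊥ ∧
  (∀ u v, Lag f g M C d us vs zs ≤ Lag f g M C d u v zs) ∧
  (∀ ζ, Lag f g M C d us vs ζ ≤ Lag f g M C d us vs zs)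

private lemma key_subgrad {E F : Type*} [NormedAddCommGroup E] [InnerProductSpace ℝ E]
    [NormedAddCommGroup F] [InnerProductSpace ℝ F]
    (φ : E → EReal) (hconv : ConvexE φ) (hbot : ∀ x, φ x ≠ ⊥)
    (A : E →ₗ[ℝ] F) (e c z0 : F) (lam : ℝ) (hlam : 0 < lam)
    (x0 : E) (htop : φ x0 ≠ ⊤)
    (hc : c + lam • (A x0 + e) = z0)
    (hmin : ∀ x' : E, φ x0 + ((⟪c, A x0 + e⟫ + lam / 2 * ‖A x0 + e‖ ^ 2 : ℝ) : EReal) ≤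
        φ x' + ((⟪c, A x' + e⟫ + lam / 2 * ‖A x' + e‖ ^ 2 : ℝ) : EReal)) :
    ∀ x : E, φ x0 ≤ φ x + ((⟪z0, A x - A x0⟫ : ℝ) : EReal) := by
  intro x
  by_cases hx : φ x = ⊤
  · rw [hx, EReal.top_add_of_ne_bot (EReal.coe_ne_bot _)]; exact le_top
  have ha : (((φ x0).toReal : ℝ) : EReal) = φ x0 := EReal.coe_toReal htop (hbot x0)
  have hb : (((φ x).toReal : ℝ) : EReal) = φ x := EReal.coe_toReal hx (hbot x)
  set a := (φ x0).toReal
  set b := (φ x).toReal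
  set Δ := A x - A x0 with hΔ
  set K := lam / 2 * ‖Δ‖ ^ 2 with hK
  have hK0 : 0 ≤ K := by positivity
  have hz : ⟪z0, Δ⟫ = ⟪c, Δ⟫ + lam * ⟪A x0 + e, Δ⟫ := by
    rw [← hc, inner_add_left, real_inner_smul_left]
  have claim : ∀ t : ℝ, 0 < t → t ≤ 1 → a ≤ b + ⟪z0, Δ⟫ + t * K := by
    intro t ht ht1
    have hpt : A (t • x + (1 - t) • x0) + e = (A x0 + e) + t • Δ := by
      rw [map_add, map_smul, map_smul, hΔ]
      module
    have hQ : ⟪c, A (t • x + (1 - t) • x0) + e⟫ +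
        lam / 2 * ‖A (t • x + (1 - t) • x0) + e‖ ^ 2 =
        (⟪c, A x0 + e⟫ + lam / 2 * ‖A x0 + e‖ ^ 2) + (t * ⟪z0, Δ⟫ + t ^ 2 * K) := by
      rw [hpt, inner_add_right, real_inner_smul_right, norm_add_sq_real,
        real_inner_smul_right, norm_smul, hz, hK, Real.norm_eq_abs, abs_of_pos ht]
      ring
    have hcv : φ (t • x + (1 - t) • x0) ≤ ((t * b + (1 - t) * a : ℝ) : EReal) := by
      have h := hconv x x0 t (1 - t) ht.le (by linarith) (by ring)
      rw [← ha, ← hb] at h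
      refine h.trans (le_of_eq ?_)
      push_cast
      rfl
    have h1 := (hmin (t • x + (1 - t) • x0)).trans
      (add_le_add_left hcv ((⟪c, A (t • x + (1 - t) • x0) + e⟫ +
        lam / 2 * ‖A (t • x + (1 - t) • x0) + e‖ ^ 2 : ℝ) : EReal))
    rw [← ha, hQ, ← EReal.coe_add, ← EReal.coe_add, EReal.coe_le_coe_iff] at h1
    have h2 : t * a ≤ t * (b + ⟪z0, Δ⟫ + t * K) := by nlinarith [h1]
    exact le_of_mul_le_mul_left h2 ht
  rw [← ha, ← hb, ← EReal.coe_add, EReal.coe_le_coe_iff]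
  by_contra hcon
  push_neg at hcon
  set ε := a - (b + ⟪z0, Δ⟫) with hε'
  have hε : 0 < ε := by linarith
  have htpos : 0 < min 1 (ε / (K + 1)) := by
    apply lt_min one_pos
    positivity
  have hcl := claim (min 1 (ε / (K + 1))) htpos (min_le_left _ _)
  have hm1 : min 1 (ε / (K + 1)) * K ≤ ε / (K + 1) * K :=
    mul_le_mul_of_nonneg_right (min_le_right _ _) hK0
  have hm2 : ε / (K + 1) * K < ε := by
    rw [div_mul_eq_mul_div, div_lt_iff₀ (by linarith)]
    nlinarith
  linarith

/-- if the PMM stopping criterion `‖Mu_k + Cv_k - d‖ + ‖Mu_k - w_{k-1}‖ = 0`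
holds, then `(u_k, v_k, x_k)` is a saddle point of the Lagrangian `L`, where
`x_k = z_{k-1} + λw_{k-1} + λ(Cv_k - d)`. -/
theorem pmm_stop_gives_saddle (m1 m2 n : ℕ)
    (f : EuclideanSpace ℝ (Fin m1) → EReal) (g : EuclideanSpace ℝ (Fin m2) → EReal)
    (hf : IsPCC f) (hg : IsPCC g)
    (M : EuclideanSpace ℝ (Fin m1) →ₗ[ℝ] EuclideanSpace ℝ (Fin n))
    (C : EuclideanSpace ℝ (Fin m2) →ₗ[ℝ] EuclideanSpace ℝ (Fin n))
    (d : EuclideanSpace ℝ (Fin n))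
    (lam : ℝ) (hlam : 0 < lam)
    (zp wp : EuclideanSpace ℝ (Fin n))
    (vk : EuclideanSpace ℝ (Fin m2)) (uk : EuclideanSpace ℝ (Fin m1))
    (hvk : ∀ v' : EuclideanSpace ℝ (Fin m2),
      g vk + ((⟪zp + lam • wp, C vk - d⟫ + lam / 2 * ‖C vk - d‖ ^ 2 : ℝ) : EReal) ≤
        g v' + ((⟪zp + lam • wp, C v' - d⟫ + lam / 2 * ‖C v' - d‖ ^ 2 : ℝ) : EReal))
    (huk : ∀ u' : EuclideanSpace ℝ (Fin m1),
      f uk + ((⟪zp + lam • (C vk - d), M uk⟫ + lam / 2 * ‖M uk‖ ^ 2 : ℝ) : EReal) ≤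
        f u' + ((⟪zp + lam • (C vk - d), M u'⟫ + lam / 2 * ‖M u'‖ ^ 2 : ℝ) : EReal))
    (xk : EuclideanSpace ℝ (Fin n))
    (hxk : xk = zp + lam • wp + lam • (C vk - d))
    (hstop : ‖M uk + C vk - d‖ + ‖M uk - wp‖ = 0) :
    IsSaddle f g M C d uk vk xk := by
  have hn1 : ‖M uk + C vk - d‖ = 0 := by
    nlinarith [norm_nonneg (M uk + C vk - d), norm_nonneg (M uk - wp)]
  have hn2 : ‖M uk - wp‖ = 0 := by
    nlinarith [norm_nonneg (M uk + C vk - d), norm_nonneg (M uk - wp)]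
  have heq : M uk + C vk - d = 0 := norm_eq_zero.mp hn1
  have hw : M uk = wp := sub_eq_zero.mp (norm_eq_zero.mp hn2)
  have hcd : C vk - d = -M uk := by
    have h := heq
    rw [add_sub_assoc] at h
    exact eq_neg_of_add_eq_zero_right h
  have hx : xk = zp := by
    rw [hxk, ← hw, hcd, smul_neg]
    abel
  -- properness at the iterates
  have hftop : f uk ≠ ⊤ := by
    intro htp
    obtain ⟨u0, hu0⟩ := hf.2.1
    have h := huk u0
    have hc0 : (((f u0).toReal : ℝ) : EReal) = f u0 := EReal.coe_toReal hu0 (hf.1 u0)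
    rw [htp, EReal.top_add_coe, top_le_iff, ← hc0, ← EReal.coe_add] at h
    exact EReal.coe_ne_top _ h
  have hgtop : g vk ≠ ⊤ := by
    intro htp
    obtain ⟨v0, hv0⟩ := hg.2.1
    have h := hvk v0
    have hc0 : (((g v0).toReal : ℝ) : EReal) = g v0 := EReal.coe_toReal hv0 (hg.1 v0)
    rw [htp, EReal.top_add_coe, top_le_iff, ← hc0, ← EReal.coe_add] at h
    exact EReal.coe_ne_top _ h
  have ha : (((f uk).toReal : ℝ) : EReal) = f uk := EReal.coe_toReal hftop (hf.1 uk)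
  have hb : (((g vk).toReal : ℝ) : EReal) = g vk := EReal.coe_toReal hgtop (hg.1 vk)
  set a := (f uk).toReal
  set b := (g vk).toReal
  -- subgradient inequalities from the two minimizations
  have hkeyf : ∀ u : EuclideanSpace ℝ (Fin m1),
      f uk ≤ f u + ((⟪zp, M u - M uk⟫ : ℝ) : EReal) := by
    refine key_subgrad f hf.2.2.2 hf.1 M 0 (zp + lam • (C vk - d)) zp lam hlam uk hftop ?_ ?_
    · rw [add_zero, hcd, smul_neg]
      abel
    · intro u'
      simpa using huk u'
  have hkeyg : ∀ v : EuclideanSpace ℝ (Fin m2),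
      g vk ≤ g v + ((⟪zp, C v - C vk⟫ : ℝ) : EReal) := by
    refine key_subgrad g hg.2.2.2 hg.1 C (-d) (zp + lam • wp) zp lam hlam vk hgtop ?_ ?_
    · rw [← hw, ← sub_eq_add_neg, hcd, smul_neg]
      abel
    · intro v'
      simpa [← sub_eq_add_neg] using hvk v'
  have hL : Lag f g M C d uk vk xk = ((a + b : ℝ) : EReal) := by
    unfold Lag
    rw [heq, inner_zero_left, ← ha, ← hb]
    push_cast
    rw [add_zero]
  refine ⟨?_, ?_, ?_, ?_⟩
  · rw [hL]; exact EReal.coe_ne_top _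
  · rw [hL]; exact EReal.coe_ne_bot _
  · intro u v
    rw [hL]
    unfold Lag
    by_cases hfu : f u = ⊤
    · rw [hfu, EReal.top_add_of_ne_bot (hg.1 v), EReal.top_add_of_ne_bot (EReal.coe_ne_bot _)]
      exact le_top
    by_cases hgv : g v = ⊤
    · rw [hgv, EReal.add_top_of_ne_bot (hf.1 u), EReal.top_add_of_ne_bot (EReal.coe_ne_bot _)]
      exact le_top
    have hfu' : (((f u).toReal : ℝ) : EReal) = f u := EReal.coe_toReal hfu (hf.1 u)
    have hgv' : (((g v).toReal : ℝ) : EReal) = g v := EReal.coe_toReal hgv (hg.1 v)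
    have h1 := hkeyf u
    have h2 := hkeyg v
    rw [← ha, ← hfu', ← EReal.coe_add, EReal.coe_le_coe_iff] at h1
    rw [← hb, ← hgv', ← EReal.coe_add, EReal.coe_le_coe_iff] at h2
    have hsplit : M u + C v - d = (M u - M uk) + (C v - C vk) := by
      have hd : d = M uk + C vk := by
        have := sub_eq_zero.mp heq
        exact this.symm
      rw [hd]
      abel
    have hinner : ⟪M u + C v - d, zp⟫ = ⟪zp, M u - M uk⟫ + ⟪zp, C v - C vk⟫ := by
      rw [hsplit, real_inner_comm, inner_add_right]
    rw [← hfu', ← hgv', hx, ← EReal.coe_add, ← EReal.coe_add, EReal.coe_le_coe_iff, hinner]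
    linarith
  · intro ζ
    rw [hL]
    unfold Lag
    rw [heq, inner_zero_left, ← ha, ← hb]
    push_cast
    rw [add_zero]
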